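/- Let r ≥ 2 be an integer, G a graph on n vertices, and H any K_{1,r}-saturated subgraph of G. Then H has at least (r−1)·(n − α_{r−2}(G))/2 edges. -/

import Mathlib

/-- The star graph `K_{1,r}`: one center (vertex `0`) joined to `r` leaves. -/
def starGraph (r : ℕ) : SimpleGraph (Fin (r + 1)) where
  Adj u v := u ≠ v ∧ (u = 0 ∨ v = 0)
  symm := ⟨fun u v h => ⟨h.1.symm, h.2.symm⟩⟩
  loopless := ⟨fun u h => h.1 rfl⟩

/-- `F` is contained in `G` as a subgraph, i.e. `G` has a copy of `F`. -/
def ContainsCopy {α β : Type*} (F : SimpleGraph α) (G : SimpleGraph β) : Prop :=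
  ∃ f : F →g G, Function.Injective f

/-- `H` is an `F`-saturated subgraph of `G`: it is a spanning subgraph of `G` (same vertex
set, `H ≤ G`), it is `F`-free, and adding any edge of `G` missing from `H` creates a copy
of `F`. -/
def IsSatSubgraph {V α : Type*} (G : SimpleGraph V) (F : SimpleGraph α)
    (H : SimpleGraph V) : Prop :=
  H ≤ G ∧ ¬ ContainsCopy F H ∧
    ∀ u v : V, G.Adj u v → ¬ H.Adj u v →
      ContainsCopy F (H ⊔ SimpleGraph.fromEdgeSet {s(u, v)})

/-- `sat(G, F)`: the minimum number of edges of an `F`-saturated subgraph of `G`. -/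
noncomputable def satNum {V α : Type*} (G : SimpleGraph V) (F : SimpleGraph α) : ℕ :=
  sInf {m | ∃ H : SimpleGraph V, IsSatSubgraph G F H ∧ H.edgeSet.ncard = m}

/-- `S` is `k`-independent in `G`: the induced subgraph `G[S]` has maximum degree at
most `k`, i.e. every vertex of `S` has at most `k` neighbours inside `S`. -/
def IsKIndepSet {V : Type*} (G : SimpleGraph V) (k : ℕ) (S : Set V) : Prop :=
  ∀ v ∈ S, (S ∩ G.neighborSet v).ncard ≤ k

/-- `α_k(G)`: the maximum cardinality of a `k`-independent set in `G`. -/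
noncomputable def kIndepNum {V : Type*} (G : SimpleGraph V) (k : ℕ) : ℕ :=
  sSup {m | ∃ S : Set V, IsKIndepSet G k S ∧ S.ncard = m}

/-- `α(G)`: the independence number of `G`. -/
noncomputable def indepNum {V : Type*} (G : SimpleGraph V) : ℕ :=
  sSup {m | ∃ S : Set V, (∀ u ∈ S, ∀ v ∈ S, ¬ G.Adj u v) ∧ S.ncard = m}

/-- The probability, under the Erdős–Rényi random graph `𝔾(n, p)`, that the sampled graph
lies in the set `A`; each labelled graph `G` on the vertex set `{1, …, n}` is sampled
with probability `p ^ e(G) * (1 - p) ^ (C(n,2) - e(G))`. -/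
noncomputable def gnpProb (n : ℕ) (p : ℝ) (A : Set (SimpleGraph (Fin n))) : ℝ :=
  ∑ G : SimpleGraph (Fin n),
    A.indicator (fun G => p ^ G.edgeSet.ncard * (1 - p) ^ (n.choose 2 - G.edgeSet.ncard)) G

open scoped Classical in
lemma key_claim (n r : ℕ) (hr : 2 ≤ r) (G H : SimpleGraph (Fin n))
    (hH : IsSatSubgraph G (starGraph r) H) (u v : Fin n)
    (hu : H.degree u ≤ r - 2) (hv : H.degree v ≤ r - 2) (hG : G.Adj u v) : H.Adj u v := by
  by_contra h
  obtain ⟨f, hf⟩ := hH.2.2 u v hG h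
  by_cases hc : ∀ i : Fin (r+1), i ≠ 0 → H.Adj (f 0) (f i)
  · apply hH.2.1
    refine ⟨⟨f, ?_⟩, hf⟩
    rintro a b ⟨hab, h0 | h0⟩
    · subst h0; exact hc b (fun hb => hab hb.symm)
    · subst h0; exact (hc a hab).symm
  · push_neg at hc
    obtain ⟨i, hi0, hiH⟩ := hc
    have hstar : ∀ j : Fin (r+1), j ≠ 0 →
        (H ⊔ SimpleGraph.fromEdgeSet {s(u, v)}).Adj (f 0) (f j) := by
      intro j hj
      exact f.map_rel ⟨fun hh => hj hh.symm, Or.inl rfl⟩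
    have hie : s(f 0, f i) = s(u, v) := by
      have := hstar i hi0
      simp only [SimpleGraph.sup_adj, SimpleGraph.fromEdgeSet_adj, Set.mem_singleton_iff] at this
      tauto
    have hdeg0 : H.degree (f 0) ≤ r - 2 := by
      rw [Sym2.eq_iff] at hie
      rcases hie with ⟨h1, _⟩ | ⟨h1, _⟩ <;> rw [h1] <;> assumption
    -- all other leaves are H-neighbors of f 0
    have hnb : ∀ j : Fin (r+1), j ≠ 0 → j ≠ i → f j ∈ H.neighborFinset (f 0) := by
      intro j hj0 hji
      rw [SimpleGraph.mem_neighborFinset]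
      have := hstar j hj0
      simp only [SimpleGraph.sup_adj, SimpleGraph.fromEdgeSet_adj, Set.mem_singleton_iff] at this
      rcases this with hH' | ⟨heq, _⟩
      · exact hH'
      · exfalso
        have heq2 : s(f 0, f j) = s(f 0, f i) := heq.trans hie.symm
        rw [Sym2.eq_iff] at heq2
        rcases heq2 with ⟨_, h2⟩ | ⟨h2, _⟩
        · exact hji (hf h2)
        · exact hi0 (hf h2.symm)
    have hcard : r - 1 ≤ H.degree (f 0) := by
      have hinj : Set.InjOn (fun j => f j) ↑((Finset.univ : Finset (Fin (r+1))) \ {0, i}) :=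
        fun a _ b _ hab => hf hab
      have := Finset.card_le_card_of_injOn (fun j => f j) (fun j hj => by
        simp only [Finset.mem_coe, Finset.mem_sdiff, Finset.mem_insert, Finset.mem_singleton, not_or] at hj
        exact hnb j hj.2.1 hj.2.2) hinj
      have hcs : ((Finset.univ : Finset (Fin (r+1))) \ {0, i}).card = r - 1 := by
        rw [Finset.card_sdiff_of_subset (Finset.subset_univ _)]
        rw [Finset.card_insert_of_notMem (by simpa using Ne.symm hi0), Finset.card_singleton]
        simp
      rw [hcs] at this
      simpa [SimpleGraph.card_neighborFinset_eq_degree] using this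
    omega

/-- Let `r ≥ 2` be an integer, `G` a graph on `n` vertices, and `H` any
`K_{1,r}`-saturated subgraph of `G`. Then `H` has at least `(r-1)(n - α_{r-2}(G))/2`
edges. -/
theorem sat_subgraph_edge_lower_bound (n r : ℕ) (hr : 2 ≤ r) (G H : SimpleGraph (Fin n))
    (hH : IsSatSubgraph G (starGraph r) H) :
    ((r : ℝ) - 1) * ((n : ℝ) - (kIndepNum G (r - 2) : ℝ)) / 2
      ≤ (H.edgeSet.ncard : ℝ) := by
  classical
  set S : Finset (Fin n) := Finset.univ.filter (fun v => H.degree v ≤ r - 2) with hS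
  -- S is (r-2)-independent in G
  have hSind : IsKIndepSet G (r - 2) ↑S := by
    intro v hv
    simp only [Finset.coe_filter, Set.mem_setOf_eq, Finset.mem_coe, Finset.mem_filter,
      Finset.mem_univ, true_and, hS] at hv
    have hsub : (↑S : Set (Fin n)) ∩ G.neighborSet v ⊆ H.neighborSet v := by
      rintro u ⟨huS, huN⟩
      simp only [Finset.coe_filter, Set.mem_setOf_eq, hS, Finset.mem_univ, true_and] at huS
      exact key_claim n r hr G H hH v u hv huS huN
    calc ((↑S : Set (Fin n)) ∩ G.neighborSet v).ncard
        ≤ (H.neighborSet v).ncard := Set.ncard_le_ncard hsub (Set.toFinite _)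
      _ = H.degree v := by
          rw [Set.ncard_eq_toFinset_card', Set.toFinset_card, H.card_neighborSet_eq_degree]
      _ ≤ r - 2 := hv
  -- S.card ≤ kIndepNum
  have hScard : S.card ≤ kIndepNum G (r - 2) := by
    apply le_csSup
    · refine ⟨n, ?_⟩
      rintro m ⟨T, _, rfl⟩
      calc T.ncard ≤ (Set.univ : Set (Fin n)).ncard :=
            Set.ncard_le_ncard (Set.subset_univ _) Set.finite_univ
        _ = n := by rw [Set.ncard_univ]; simp
    · exact ⟨↑S, hSind, by rw [Set.ncard_coe_finset]⟩
  -- degree sum bound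
  have hdegsum : (r - 1) * (n - S.card) ≤ 2 * H.edgeFinset.card := by
    rw [← SimpleGraph.sum_degrees_eq_twice_card_edges]
    calc (r - 1) * (n - S.card)
        = (Finset.univ \ S).card * (r - 1) := by
          rw [Finset.card_sdiff_of_subset (Finset.subset_univ _), Finset.card_univ, Fintype.card_fin,
            Nat.mul_comm]
      _ ≤ ∑ v ∈ Finset.univ \ S, H.degree v := by
          have := Finset.card_nsmul_le_sum (Finset.univ \ S) (fun v => H.degree v) (r - 1)
            (fun v hv => by
              simp only [Finset.mem_sdiff, Finset.mem_univ, true_and, hS, Finset.mem_filter,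
                not_and, not_le] at hv
              show r - 1 ≤ H.degree v
              omega)
          simpa [smul_eq_mul] using this
      _ ≤ ∑ v, H.degree v := Finset.sum_le_sum_of_subset (Finset.sdiff_subset)
  -- wrap up over ℝ
  have hE : H.edgeSet.ncard = H.edgeFinset.card := by
    rw [← Set.ncard_coe_finset, SimpleGraph.coe_edgeFinset]
  have hSn : S.card ≤ n := by
    simpa using Finset.card_le_card (Finset.subset_univ S)
  rw [div_le_iff₀ (by norm_num : (0:ℝ) < 2)]
  have hle : ((n : ℝ) - (kIndepNum G (r - 2) : ℝ)) ≤ ((n - S.card : ℕ) : ℝ) := by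
    rw [Nat.cast_sub hSn]
    have := (Nat.cast_le (α := ℝ)).2 hScard
    linarith
  have hr1 : ((r : ℝ) - 1) = ((r - 1 : ℕ) : ℝ) := by
    rw [Nat.cast_sub (by omega)]; simp
  calc ((r : ℝ) - 1) * ((n : ℝ) - (kIndepNum G (r - 2) : ℝ))
      ≤ ((r - 1 : ℕ) : ℝ) * ((n - S.card : ℕ) : ℝ) := by
        rw [← hr1]; apply mul_le_mul_of_nonneg_left hle; have : (2:ℝ) ≤ r := by exact_mod_cast hr
        linarith
    _ = (((r - 1) * (n - S.card) : ℕ) : ℝ) := by push_cast; ring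
    _ ≤ ((2 * H.edgeFinset.card : ℕ) : ℝ) := by exact_mod_cast hdegsum
    _ = (H.edgeSet.ncard : ℝ) * 2 := by rw [hE]; push_cast; ring
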